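/- Let θ > 0 and let ρ: ℝ → ℝ be a continuous function with ∫_0^∞ e^{-θt}|ρ(t)| dt < ∞ and ρ even. Suppose G is a centered process with G_0 = 0, stationary increments, and E(G_t²) = ρ(t). Then the stationary variance σ² := θ² ∫_{-∞}^0 ∫_{-∞}^0 e^{θu} e^{θv} R(u,v) du dv, where R(u,v) = (ρ(u) + ρ(v) - ρ(v-u))/2, satisfies σ² = (θ/2) ∫_0^∞ e^{-θt} ρ(t) dt. -/

import Mathlib

open MeasureTheory Real Set

private lemma aux_exp_int {b : ℝ} (hb : 0 < b) (c : ℝ) :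
    IntegrableOn (fun x => Real.exp (b * x)) (Iic c) := by
  have h := exp_neg_integrableOn_Ioi (-c) hb
  have hmp := (Measure.measurePreserving_neg (volume : Measure ℝ)).integrableOn_comp_preimage
      (Homeomorph.neg ℝ).measurableEmbedding (f := fun x : ℝ => Real.exp (-b * x)) (s := Ioi (-c))
  have hpre : (fun x : ℝ => -x) ⁻¹' Ioi (-c) = Iio c := by ext x; simp
  rw [hpre] at hmp
  have h2 : IntegrableOn (fun x : ℝ => Real.exp (b * x)) (Iio c) := by
    have := hmp.mpr h
    refine this.congr_fun (fun x _ => ?_) measurableSet_Iio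
    simp [Function.comp, neg_mul, mul_comm]
  exact (integrableOn_Iic_iff_integrableOn_Iio).mpr h2

private lemma aux_exp_val {b : ℝ} (hb : 0 < b) (c : ℝ) :
    ∫ x in Iic c, Real.exp (b * x) = Real.exp (b * c) / b := by
  have h1 : ∫ x in Iic c, Real.exp (b * x) = ∫ x in Ioi (-c), Real.exp (-b * x) := by
    rw [← integral_comp_neg_Iic c (fun x => Real.exp (-b * x))]
    refine setIntegral_congr_fun measurableSet_Iic (fun x _ => ?_)
    ring_nf
  rw [h1]
  have h2 := integral_comp_mul_left_Ioi (fun x => Real.exp (-x)) (-c) hb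
  simp only [neg_mul] at h2 ⊢
  rw [show (fun x => Real.exp (-(b*x))) = fun x => (fun y => Real.exp (-y)) (b * x) from rfl] at *
  rw [h2, integral_exp_neg_Ioi, smul_eq_mul, mul_neg, neg_neg]
  ring

private lemma aux_exp_val_Iio {b : ℝ} (hb : 0 < b) (c : ℝ) :
    ∫ x in Iio c, Real.exp (b * x) = Real.exp (b * c) / b := by
  rw [setIntegral_congr_set Iio_ae_eq_Iic]; exact aux_exp_val hb c

private lemma aux_refl_int {f : ℝ → ℝ} (hf : IntegrableOn f (Ioi (0:ℝ))) :
    IntegrableOn (fun x => f (-x)) (Iic (0:ℝ)) := by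
  have hmp := (Measure.measurePreserving_neg (volume : Measure ℝ)).integrableOn_comp_preimage
      (Homeomorph.neg ℝ).measurableEmbedding (f := f) (s := Ioi (0:ℝ))
  have hpre : (fun x : ℝ => -x) ⁻¹' Ioi (0:ℝ) = Iio 0 := by ext x; simp
  rw [hpre] at hmp
  exact (integrableOn_Iic_iff_integrableOn_Iio).mpr (hmp.mpr hf)

private lemma aux_refl_val (f : ℝ → ℝ) :
    ∫ x in Iic (0:ℝ), f (-x) = ∫ x in Ioi (0:ℝ), f x := by
  simpa using integral_comp_neg_Iic (0:ℝ) f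

private lemma aux_emb_sub (v : ℝ) : MeasurableEmbedding (fun x : ℝ => v - x) := by
  have : (fun x : ℝ => v - x) = (fun x : ℝ => v + x) ∘ (fun x : ℝ => -x) := by
    ext x; simp [sub_eq_add_neg]
  rw [this]
  exact (Homeomorph.addLeft v).measurableEmbedding.comp (Homeomorph.neg ℝ).measurableEmbedding

private lemma aux_mp_sub (v : ℝ) : MeasurePreserving (fun x : ℝ => v - x) volume volume :=
  Measure.measurePreserving_sub_left volume v

/-- Fubini step: `∫_{v ≤ 0} e^{2θv} ∫_{v < t ≤ 0} e^{-θt} ρ t dt dv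
    = (∫_{t ≤ 0} e^{θt} ρ t dt) / (2θ)`. -/
private lemma aux_fubini {θ : ℝ} (hθ : 0 < θ) (ρ : ℝ → ℝ) (hρcont : Continuous ρ)
    (habs : IntegrableOn (fun t => Real.exp (θ * t) * |ρ t|) (Iic (0:ℝ))) :
    IntegrableOn (fun v => Real.exp (2*θ*v) * (∫ t in Ioc v (0:ℝ), Real.exp (-θ*t) * ρ t))
      (Iic (0:ℝ)) ∧
    ∫ v in Iic (0:ℝ), Real.exp (2*θ*v) * (∫ t in Ioc v (0:ℝ), Real.exp (-θ*t) * ρ t)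
      = (∫ t in Iic (0:ℝ), Real.exp (θ*t) * ρ t) / (2*θ) := by
  have h2θ : (0:ℝ) < 2*θ := by linarith
  set φ : ℝ × ℝ → ℝ := fun p => Real.exp (2*θ*p.1) * (Real.exp (-θ*p.2) * ρ p.2) with hφ
  have hφcont : Continuous φ := by fun_prop
  set S : Set (ℝ×ℝ) := {p : ℝ×ℝ | p.1 < p.2 ∧ p.2 ≤ 0} with hSdef
  have hS : MeasurableSet S := by
    have : S = {p : ℝ×ℝ | p.1 < p.2} ∩ {p : ℝ×ℝ | p.2 ≤ 0} := rfl
    rw [this]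
    exact (measurableSet_lt measurable_fst measurable_snd).inter
      (measurableSet_le measurable_snd measurable_const)
  set F : ℝ → ℝ → ℝ := fun v t => S.indicator φ (v, t) with hF
  have huncurry : Function.uncurry F = S.indicator φ := by
    funext p; cases p; rfl
  have hmeas : AEStronglyMeasurable (Function.uncurry F) ((volume : Measure ℝ).prod volume) := by
    rw [huncurry]
    exact hφcont.aestronglyMeasurable.indicator hS
  -- slice in t
  have hslice_t : ∀ v : ℝ, (fun t => F v t)
      = (Ioc v 0).indicator (fun t => Real.exp (2*θ*v) * (Real.exp (-θ*t) * ρ t)) := by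
    intro v; funext t
    by_cases h : t ∈ Ioc v 0
    · rw [Set.indicator_of_mem h]
      exact Set.indicator_of_mem (show (v,t) ∈ S from ⟨h.1, h.2⟩) φ
    · rw [Set.indicator_of_notMem h]
      exact Set.indicator_of_notMem (fun hc => h ⟨hc.1, hc.2⟩) φ
  -- slice in v
  have hslice_v : ∀ t : ℝ, t ≤ 0 → (fun v => F v t)
      = (Iio t).indicator (fun v => Real.exp (2*θ*v) * (Real.exp (-θ*t) * ρ t)) := by
    intro t ht; funext v
    by_cases h : v ∈ Iio t
    · rw [Set.indicator_of_mem h]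
      exact Set.indicator_of_mem (show (v,t) ∈ S from ⟨h, ht⟩) φ
    · rw [Set.indicator_of_notMem h]
      exact Set.indicator_of_notMem (fun hc => h hc.1) φ
  have hslice_v' : ∀ t : ℝ, ¬ t ≤ 0 → (fun v => F v t) = 0 := by
    intro t ht; funext v
    exact Set.indicator_of_notMem (fun hc => ht hc.2) φ
  -- integrability in v for each t
  have hint_v : ∀ t : ℝ, Integrable (fun v => F v t) := by
    intro t
    by_cases ht : t ≤ 0
    · rw [hslice_v t ht]
      rw [integrable_indicator_iff measurableSet_Iio]
      exact (((aux_exp_int h2θ t).mono_set Iio_subset_Iic_self).mul_const _)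
    · rw [hslice_v' t ht]; exact integrable_zero _ _ _
  -- the iterated norm integral
  have hnorm : (fun t => ∫ v, ‖F v t‖)
      = (Iic (0:ℝ)).indicator (fun t => Real.exp (θ*t) * |ρ t| / (2*θ)) := by
    funext t
    by_cases ht : t ≤ 0
    · rw [Set.indicator_of_mem (show t ∈ Iic (0:ℝ) from ht)]
      have : (fun v => ‖F v t‖)
          = (Iio t).indicator (fun v => Real.exp (2*θ*v) * (Real.exp (-θ*t) * |ρ t|)) := by
        funext v
        rw [congrFun (hslice_v t ht) v]
        by_cases h : v ∈ Iio t
        · rw [Set.indicator_of_mem h, Set.indicator_of_mem h, Real.norm_eq_abs,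
            abs_mul, abs_mul, abs_of_pos (Real.exp_pos _), abs_of_pos (Real.exp_pos _)]
        · rw [Set.indicator_of_notMem h, Set.indicator_of_notMem h, norm_zero]
      rw [this, integral_indicator measurableSet_Iio]
      rw [MeasureTheory.integral_mul_const, aux_exp_val_Iio h2θ t, div_mul_eq_mul_div,
        ← mul_assoc, ← Real.exp_add, show 2*θ*t + -θ*t = θ*t by ring]
    · rw [Set.indicator_of_notMem (show t ∉ Iic (0:ℝ) from ht)]
      have hz : ∀ v, F v t = 0 := fun v => congrFun (hslice_v' t ht) v
      simp [hz]
  have hnormint : Integrable (fun t => ∫ v, ‖F v t‖) := by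
    rw [hnorm]
    rw [integrable_indicator_iff measurableSet_Iic]
    exact habs.div_const _
  have hFint : Integrable (Function.uncurry F) ((volume : Measure ℝ).prod volume) :=
    (integrable_prod_iff' hmeas).mpr ⟨Filter.Eventually.of_forall hint_v, hnormint⟩
  have hswap := integral_integral_swap hFint
  have h1 : ∀ v : ℝ, (∫ t, F v t)
      = Real.exp (2*θ*v) * (∫ t in Ioc v (0:ℝ), Real.exp (-θ*t) * ρ t) := by
    intro v
    rw [hslice_t v, integral_indicator measurableSet_Ioc, MeasureTheory.integral_const_mul]
  have hint_left : Integrable (fun v : ℝ =>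
      Real.exp (2*θ*v) * (∫ t in Ioc v (0:ℝ), Real.exp (-θ*t) * ρ t)) volume := by
    refine hFint.integral_prod_left.congr (Filter.Eventually.of_forall (fun v => ?_))
    exact h1 v
  refine ⟨hint_left.integrableOn, ?_⟩
  -- LHS of swap
  have hL : (∫ v, ∫ t, F v t)
      = ∫ v in Iic (0:ℝ), Real.exp (2*θ*v) * (∫ t in Ioc v (0:ℝ), Real.exp (-θ*t) * ρ t) := by
    simp only [h1]
    refine (setIntegral_eq_integral_of_forall_compl_eq_zero (fun v hv => ?_)).symm
    have hv' : (0:ℝ) < v := by simpa using hv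
    rw [Set.Ioc_eq_empty (by linarith)]
    simp
  -- RHS of swap
  have hR : (∫ t, ∫ v, F v t)
      = (∫ t in Iic (0:ℝ), Real.exp (θ*t) * ρ t) / (2*θ) := by
    have h1 : ∀ t : ℝ, (∫ v, F v t)
        = (Iic (0:ℝ)).indicator (fun t => Real.exp (θ*t) * ρ t / (2*θ)) t := by
      intro t
      by_cases ht : t ≤ 0
      · rw [Set.indicator_of_mem (show t ∈ Iic (0:ℝ) from ht), hslice_v t ht,
          integral_indicator measurableSet_Iio, MeasureTheory.integral_mul_const,
          aux_exp_val_Iio h2θ t, div_mul_eq_mul_div, ← mul_assoc, ← Real.exp_add,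
          show 2*θ*t + -θ*t = θ*t by ring]
      · rw [Set.indicator_of_notMem (show t ∉ Iic (0:ℝ) from ht), hslice_v' t ht]
        simp
    simp only [h1]
    rw [integral_indicator measurableSet_Iic, integral_div]
  rw [← hL, hswap, hR]

theorem stmt_9 (θ : ℝ) (hθ : 0 < θ) (ρ : ℝ → ℝ) (hρcont : Continuous ρ)
    (hρeven : ∀ x, ρ (-x) = ρ x) (hρ0 : ρ 0 = 0)
    (hρint : IntegrableOn (fun t => Real.exp (-θ * t) * |ρ t|) (Ioi 0))
    (R : ℝ → ℝ → ℝ) (hR : ∀ u v, R u v = (ρ u + ρ v - ρ (v - u)) / 2)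
    (hInner : ∀ v : ℝ, IntegrableOn
      (fun u => Real.exp (θ * u) * Real.exp (θ * v) * R u v) (Iic 0))
    (hOuter : IntegrableOn
      (fun v => ∫ u in Iic (0:ℝ), Real.exp (θ * u) * Real.exp (θ * v) * R u v)
      (Iic 0)) :
    θ ^ 2 * ∫ v in Iic (0:ℝ), ∫ u in Iic (0:ℝ),
        Real.exp (θ * u) * Real.exp (θ * v) * R u v
    = (θ / 2) * ∫ t in Ioi (0:ℝ), Real.exp (-θ * t) * ρ t := by
  set g : ℝ → ℝ := fun t => Real.exp (-θ * t) * ρ t with hg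
  set A : ℝ := ∫ t in Ioi (0:ℝ), g t with hA
  have hgcont : Continuous g := by fun_prop
  -- integrability of g on Ioi 0
  have hgint : IntegrableOn g (Ioi (0:ℝ)) := by
    refine hρint.mono' hgcont.aestronglyMeasurable.restrict ?_
    refine Filter.Eventually.of_forall (fun t => ?_)
    rw [hg, Real.norm_eq_abs, abs_mul, abs_of_pos (Real.exp_pos _)]
  -- reflected integrability and value on Iic 0
  have hrefl_int : IntegrableOn (fun t => Real.exp (θ * t) * ρ t) (Iic (0:ℝ)) := by
    have := aux_refl_int hgint
    refine this.congr_fun (fun t _ => ?_) measurableSet_Iic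
    simp only [hg, hρeven, neg_mul, mul_neg, neg_neg]
  have hrefl_val : ∫ t in Iic (0:ℝ), Real.exp (θ * t) * ρ t = A := by
    rw [hA, ← aux_refl_val g]
    refine setIntegral_congr_fun measurableSet_Iic (fun t _ => ?_)
    simp only [hg, hρeven, neg_mul, mul_neg, neg_neg]
  have hrefl_abs : IntegrableOn (fun t => Real.exp (θ * t) * |ρ t|) (Iic (0:ℝ)) := by
    have := aux_refl_int hρint
    refine this.congr_fun (fun t _ => ?_) measurableSet_Iic
    simp only [hρeven, neg_mul, mul_neg, neg_neg]
  -- value on Iic 0 of exp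
  have hexp0 : ∫ v in Iic (0:ℝ), Real.exp (θ * v) = 1/θ := by
    rw [aux_exp_val hθ 0, mul_zero, Real.exp_zero]
  have h2θ : (0:ℝ) < 2*θ := by linarith
  have hexp0' : ∫ v in Iic (0:ℝ), Real.exp (2*θ*v) = 1/(2*θ) := by
    rw [aux_exp_val h2θ 0, mul_zero, Real.exp_zero]
  -- substitution: the convolution-type integral
  have hIci : ∀ v : ℝ, v ≤ 0 → IntegrableOn g (Ici v) := by
    intro v hv
    rw [← Icc_union_Ioi_eq_Ici hv]
    exact (hgcont.integrableOn_Icc).union hgint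
  have hptwise : ∀ v t : ℝ, Real.exp (θ*(v - t)) * ρ t = Real.exp (θ*v) * g t := by
    intro v t
    simp only [hg]
    rw [show Real.exp (θ*(v-t)) = Real.exp (θ*v) * Real.exp (-θ*t) from by
      rw [← Real.exp_add]; ring_nf]
    ring
  have hpre : ∀ v : ℝ, (fun x : ℝ => v - x) ⁻¹' (Ici v) = Iic 0 := by
    intro v; ext x
    simp only [mem_preimage, mem_Ici, mem_Iic]
    constructor <;> intro h <;> linarith
  have hconv_int : ∀ v : ℝ, v ≤ 0 →
      IntegrableOn (fun u => Real.exp (θ * u) * ρ (v - u)) (Iic (0:ℝ)) := by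
    intro v hv
    have h1 : IntegrableOn (fun t => Real.exp (θ*(v - t)) * ρ t) (Ici v) := by
      have h0 : IntegrableOn (fun t => Real.exp (θ*v) * g t) (Ici v) :=
        (hIci v hv).const_mul (Real.exp (θ*v))
      exact h0.congr_fun (fun t _ => (hptwise v t).symm) measurableSet_Ici
    have h2 := ((aux_mp_sub v).integrableOn_comp_preimage (aux_emb_sub v)
      (f := fun t => Real.exp (θ*(v - t)) * ρ t) (s := Ici v)).mpr h1
    rw [hpre v] at h2
    refine h2.congr_fun (fun u _ => ?_) measurableSet_Iic
    simp only [Function.comp]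
    rw [show v - (v - u) = u by ring]
  have hsub_val : ∀ v : ℝ, v ≤ 0 →
      ∫ u in Iic (0:ℝ), Real.exp (θ * u) * ρ (v - u)
        = Real.exp (θ*v) * ((∫ t in Ioc v (0:ℝ), g t) + A) := by
    intro v hv
    have step1 : ∫ u in Iic (0:ℝ), Real.exp (θ * u) * ρ (v - u)
        = ∫ t in Ici v, Real.exp (θ*(v - t)) * ρ t := by
      rw [← (aux_mp_sub v).setIntegral_preimage_emb (aux_emb_sub v)
        (fun t => Real.exp (θ*(v - t)) * ρ t) (Ici v), hpre v]
      refine setIntegral_congr_fun measurableSet_Iic (fun u _ => ?_)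
      rw [show v - (v - u) = u by ring]
    rw [step1]
    rw [setIntegral_congr_fun measurableSet_Ici (fun t _ => hptwise v t),
      MeasureTheory.integral_const_mul]
    congr 1
    rw [integral_Ici_eq_integral_Ioi, ← Ioc_union_Ioi_eq_Ioi hv,
      setIntegral_union (Set.Ioc_disjoint_Ioi le_rfl) measurableSet_Ioi
        ((hgcont.integrableOn_Icc).mono_set Ioc_subset_Icc_self) hgint]
  -- evaluation of inner integral
  have hinner : ∀ v ∈ Iic (0:ℝ),
      (∫ u in Iic (0:ℝ), Real.exp (θ * u) * Real.exp (θ * v) * R u v)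
      = (A/2) * Real.exp (θ*v) + (1/(2*θ)) * (Real.exp (θ*v) * ρ v)
        - (1/2) * (Real.exp (2*θ*v) * ((∫ t in Ioc v (0:ℝ), g t) + A)) := by
    intro v hv
    rw [mem_Iic] at hv
    have e1 : ∀ u : ℝ, Real.exp (θ * u) * Real.exp (θ * v) * R u v
        = (Real.exp (θ*v)/2) * (Real.exp (θ*u) * ρ u)
          + ((Real.exp (θ*v) * ρ v)/2) * Real.exp (θ*u)
          - (Real.exp (θ*v)/2) * (Real.exp (θ*u) * ρ (v - u)) := by
      intro u; rw [hR]; ring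
    rw [setIntegral_congr_fun measurableSet_Iic (fun u _ => e1 u)]
    have i1 : Integrable (fun u : ℝ => Real.exp (θ*v)/2 * (Real.exp (θ*u) * ρ u))
        (volume.restrict (Iic 0)) := hrefl_int.const_mul _
    have i2 : Integrable (fun u : ℝ => Real.exp (θ*v) * ρ v/2 * Real.exp (θ*u))
        (volume.restrict (Iic 0)) := (aux_exp_int hθ 0).const_mul _
    have i3 : Integrable (fun u : ℝ => Real.exp (θ*v)/2 * (Real.exp (θ*u) * ρ (v - u)))
        (volume.restrict (Iic 0)) := (hconv_int v hv).const_mul _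
    have i12 : Integrable (fun u : ℝ => Real.exp (θ*v)/2 * (Real.exp (θ*u) * ρ u)
        + Real.exp (θ*v) * ρ v/2 * Real.exp (θ*u)) (volume.restrict (Iic 0)) := i1.add i2
    rw [integral_sub i12 i3, integral_add i1 i2,
      MeasureTheory.integral_const_mul, MeasureTheory.integral_const_mul,
      MeasureTheory.integral_const_mul, hrefl_val, hexp0, hsub_val v hv]
    have h2 : Real.exp (2*θ*v) = Real.exp (θ*v) * Real.exp (θ*v) := by
      rw [← Real.exp_add]; ring_nf
    rw [h2]
    field_simp
  -- Fubini result
  have hfub := (aux_fubini hθ ρ hρcont hrefl_abs).2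
  rw [hrefl_val] at hfub
  have hfub_int : IntegrableOn
      (fun v => Real.exp (2*θ*v) * (∫ t in Ioc v (0:ℝ), g t)) (Iic (0:ℝ)) :=
    (aux_fubini hθ ρ hρcont hrefl_abs).1
  -- outer integral
  rw [setIntegral_congr_fun measurableSet_Iic hinner]
  have o1 : Integrable (fun v : ℝ => A/2 * Real.exp (θ*v)) (volume.restrict (Iic 0)) :=
    (aux_exp_int hθ 0).const_mul _
  have o2 : Integrable (fun v : ℝ => 1/(2*θ) * (Real.exp (θ*v) * ρ v))
      (volume.restrict (Iic 0)) := hrefl_int.const_mul _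
  have o3' : Integrable (fun v : ℝ => Real.exp (2*θ*v) * A) (volume.restrict (Iic 0)) :=
    (aux_exp_int h2θ 0).mul_const _
  have o3'' : IntegrableOn (fun v : ℝ => Real.exp (2*θ*v) * (∫ t in Ioc v (0:ℝ), g t)
      + Real.exp (2*θ*v) * A) (Iic (0:ℝ)) := hfub_int.add o3'
  have o3a : Integrable (fun v : ℝ => Real.exp (2*θ*v) * ((∫ t in Ioc v (0:ℝ), g t) + A))
      (volume.restrict (Iic 0)) :=
    o3''.congr_fun (fun v _ => by ring) measurableSet_Iic
  have o3 : Integrable (fun v : ℝ =>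
      (1:ℝ)/2 * (Real.exp (2*θ*v) * ((∫ t in Ioc v (0:ℝ), g t) + A)))
      (volume.restrict (Iic 0)) := o3a.const_mul _
  have o12 : Integrable (fun v : ℝ => A/2 * Real.exp (θ*v)
      + 1/(2*θ) * (Real.exp (θ*v) * ρ v)) (volume.restrict (Iic 0)) := o1.add o2
  rw [integral_sub o12 o3, integral_add o1 o2]
  rw [MeasureTheory.integral_const_mul, MeasureTheory.integral_const_mul,
    MeasureTheory.integral_const_mul, hexp0, hrefl_val]
  have hsplit : ∫ v in Iic (0:ℝ),
      Real.exp (2*θ*v) * ((∫ t in Ioc v (0:ℝ), g t) + A)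
      = A/(2*θ) + A * (1/(2*θ)) := by
    rw [setIntegral_congr_fun measurableSet_Iic
      (fun v _ => by ring :
        ∀ v ∈ Iic (0:ℝ), Real.exp (2*θ*v) * ((∫ t in Ioc v (0:ℝ), g t) + A)
          = Real.exp (2*θ*v) * (∫ t in Ioc v (0:ℝ), g t) + Real.exp (2*θ*v) * A)]
    rw [integral_add hfub_int ((aux_exp_int h2θ 0).mul_const _)]
    rw [hfub, MeasureTheory.integral_mul_const, hexp0']
    ring
  rw [hsplit]
  field_simp
  ring
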